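/- Let d ≥ 0 and let f_{−1} = 1, f_0, …, f_d be positive integers. Then the following are equivalent: (i) there exists a finite simple graph G such that, for 0 ≤ i ≤ d+1, the number of independent sets of cardinality i in G equals f_{i−1}, and G has no independent set of cardinality d+2 (i.e., the sequence is the face vector of a flag complex); (ii) there exists a finite simple graph H on t vertices (for some t ≥ d+1) such that, for every 0 ≤ j ≤ t, the number of independent sets of cardinality j in the full whiskering H^τ equals Σ_{i=0}^{min(j,d+1)} C(t−i, j−i) f_{i−1} (i.e., the sequence, extended by zeros, is the h-vector of the independence complex of a fully-whiskered graph). -/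
import Mathlib


/-- A finset of vertices is an independent set of the graph `G`. -/
def IsIndep {V : Type*} (G : SimpleGraph V) (s : Finset V) : Prop :=
  ∀ u ∈ s, ∀ v ∈ s, ¬ G.Adj u v

/-- The number of independent sets of cardinality `k` in `G`
(the face number `f_{k-1}` of the independence complex of `G`). -/
noncomputable def indepCount {V : Type*} (G : SimpleGraph V) (k : ℕ) : ℕ :=
  Set.ncard {s : Finset V | IsIndep G s ∧ s.card = k}

/-- The full whiskering `H^τ` of a graph `H`: each vertex `v` (encoded `Sum.inl v`)
receives a new whisker vertex (encoded `Sum.inr v`) joined to it by an edge. -/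
def fullWhisker {W : Type*} (H : SimpleGraph W) : SimpleGraph (W ⊕ W) :=
  SimpleGraph.fromRel fun a b =>
    match a, b with
    | Sum.inl u, Sum.inl v => H.Adj u v
    | Sum.inl v, Sum.inr w => v = w
    | _, _ => False

attribute [local instance] Classical.propDecidable

open Finset in
lemma indepCount_eq {V : Type*} [Fintype V] (G : SimpleGraph V) (k : ℕ) :
    indepCount G k =
      (Finset.univ.filter (fun s : Finset V =>
        IsIndep G s ∧ s.card = k)).card := by
  classical
  have : {s : Finset V | IsIndep G s ∧ s.card = k}
      = ↑(Finset.univ.filter fun s : Finset V => IsIndep G s ∧ s.card = k) := by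
    ext s; simp
  rw [indepCount, this, Set.ncard_coe_finset]

lemma indep_fullWhisker_iff {W : Type*} (H : SimpleGraph W) (s : Finset (W ⊕ W)) :
    IsIndep (fullWhisker H) s ↔
      IsIndep H s.toLeft ∧ ∀ v ∈ s.toLeft, v ∉ s.toRight := by
  constructor
  · intro h
    refine ⟨fun u hu v hv hadj => ?_, fun v hv hv' => ?_⟩
    · simp only [Finset.mem_toLeft] at hu hv
      exact h _ hu _ hv ⟨by simp [hadj.ne], Or.inl hadj⟩
    · simp only [Finset.mem_toLeft, Finset.mem_toRight] at hv hv'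
      exact h _ hv _ hv' ⟨by simp, Or.inl rfl⟩
  · rintro ⟨h1, h2⟩ a ha b hb ⟨hne, hr⟩
    match a, b with
    | Sum.inl u, Sum.inl v =>
      rcases hr with h | h
      · exact h1 u (by simpa using ha) v (by simpa using hb) h
      · exact h1 v (by simpa using hb) u (by simpa using ha) h
    | Sum.inl u, Sum.inr w =>
      rcases hr with h | h
      · subst h; exact h2 u (by simpa using ha) (by simpa using hb)
      · exact h
    | Sum.inr w, Sum.inl u =>
      rcases hr with h | h
      · exact h
      · subst h; exact h2 u (by simpa using hb) (by simpa using ha)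
    | Sum.inr w, Sum.inr w' =>
      rcases hr with h | h <;> exact h

open Finset in
lemma whisker_count {W : Type*} [Fintype W] (H : SimpleGraph W) (j : ℕ) :
    indepCount (fullWhisker H) j =
      ∑ i ∈ Finset.range (j + 1),
        (Fintype.card W - i).choose (j - i) * indepCount H i := by
  classical
  simp only [indepCount_eq]
  set A : Finset (Finset W) := univ.filter fun S => IsIndep H S ∧ S.card ≤ j with hA
  set B : Finset (Finset (W ⊕ W)) :=
    univ.filter fun s => IsIndep (fullWhisker H) s ∧ s.card = j with hB
  have hmap : ∀ s ∈ B, s.toLeft ∈ A := by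
    intro s hs
    simp only [hB, mem_filter, mem_univ, true_and] at hs
    simp only [hA, mem_filter, mem_univ, true_and]
    exact ⟨((indep_fullWhisker_iff H s).1 hs.1).1,
      hs.2 ▸ Finset.card_toLeft_le⟩
  rw [Finset.card_eq_sum_card_fiberwise hmap]
  have hfiber : ∀ S ∈ A, (B.filter fun s => s.toLeft = S).card
      = (Fintype.card W - S.card).choose (j - S.card) := by
    intro S hS
    simp only [hA, mem_filter, mem_univ, true_and] at hS
    rw [← Finset.card_compl, ← Finset.card_powersetCard (j - S.card) Sᶜ]
    apply Finset.card_bij (fun s _ => s.toRight)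
    · intro s hs
      simp only [hB, mem_filter, mem_univ, true_and] at hs
      obtain ⟨⟨hind, hcard⟩, htl⟩ := hs
      rw [Finset.mem_powersetCard]
      obtain ⟨hindH, hdis⟩ := (indep_fullWhisker_iff H s).1 hind
      constructor
      · intro v hv
        simp only [Finset.mem_compl]
        intro hvS
        exact hdis v (htl ▸ hvS) hv
      · have := Finset.card_toLeft_add_card_toRight (u := s)
        rw [htl, hcard] at this
        omega
    · intro s hs s' hs' h
      simp only [hB, mem_filter] at hs hs'
      rw [← Finset.toLeft_disjSum_toRight (u := s), ← Finset.toLeft_disjSum_toRight (u := s'),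
        hs.2, hs'.2, h]
    · intro T hT
      rw [Finset.mem_powersetCard] at hT
      refine ⟨S.disjSum T, ?_, by simp⟩
      simp only [hB, mem_filter, mem_univ, true_and, Finset.toLeft_disjSum]
      refine ⟨⟨?_, ?_⟩, trivial⟩
      · rw [indep_fullWhisker_iff]
        simp only [Finset.toLeft_disjSum, Finset.toRight_disjSum]
        exact ⟨hS.1, fun v hv hv' => Finset.mem_compl.1 (hT.1 hv') hv⟩
      · rw [Finset.card_disjSum, hT.2]
        omega
  rw [Finset.sum_congr rfl hfiber]
  have hmap2 : ∀ S ∈ A, S.card ∈ Finset.range (j + 1) := by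
    intro S hS
    simp only [hA, mem_filter] at hS
    simp [Nat.lt_succ_of_le hS.2.2]
  rw [← Finset.sum_fiberwise_of_maps_to hmap2
    (fun S => (Fintype.card W - S.card).choose (j - S.card))]
  refine Finset.sum_congr rfl fun i hi => ?_
  rw [Finset.mem_range] at hi
  have : A.filter (fun S => S.card = i)
      = univ.filter fun S => IsIndep H S ∧ S.card = i := by
    ext S
    simp only [hA, Finset.mem_filter, mem_univ, true_and]
    constructor
    · rintro ⟨⟨h1, h2⟩, h3⟩; exact ⟨h1, h3⟩
    · rintro ⟨h1, h2⟩; exact ⟨⟨h1, h2 ▸ Nat.lt_succ_iff.1 (h2 ▸ hi)⟩, h2⟩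
  rw [this]
  rw [Finset.sum_congr rfl (fun S hS => by
    simp only [Finset.mem_filter] at hS
    rw [hS.2.2])]
  rw [Finset.sum_const, smul_eq_mul, mul_comm]

lemma inv_lemma (t : ℕ) (a b : ℕ → ℕ)
    (h : ∀ j ≤ t, ∑ i ∈ Finset.range (j + 1), (t - i).choose (j - i) * a i
      = ∑ i ∈ Finset.range (j + 1), (t - i).choose (j - i) * b i) :
    ∀ j ≤ t, a j = b j := by
  intro j
  induction j using Nat.strong_induction_on with
  | _ j ih =>
    intro hj
    have hh := h j hj
    rw [Finset.sum_range_succ, Finset.sum_range_succ] at hh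
    have heq : ∑ i ∈ Finset.range j, (t - i).choose (j - i) * a i
        = ∑ i ∈ Finset.range j, (t - i).choose (j - i) * b i :=
      Finset.sum_congr rfl fun i hi => by
        rw [ih i (Finset.mem_range.1 hi)
          (le_trans (le_of_lt (Finset.mem_range.1 hi)) hj)]
    rw [heq] at hh
    have := Nat.add_left_cancel hh
    simpa [Nat.sub_self] using this

lemma IsIndep.subset' {V : Type*} {G : SimpleGraph V} {s t : Finset V}
    (h : IsIndep G s) (hts : t ⊆ s) : IsIndep G t :=
  fun u hu v hv => h u (hts hu) v (hts hv)

lemma indepCount_eq_zero_of_le {V : Type*} [Fintype V] {G : SimpleGraph V} {m k : ℕ}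
    (h : indepCount G m = 0) (hmk : m ≤ k) : indepCount G k = 0 := by
  classical
  rw [indepCount_eq] at h ⊢
  rw [Finset.card_eq_zero, Finset.filter_eq_empty_iff] at h ⊢
  rintro s _ ⟨hind, hcard⟩
  obtain ⟨u, hu, hcu⟩ := Finset.exists_subset_card_eq (hcard ▸ hmk)
  exact h (Finset.mem_univ u) ⟨hind.subset' hu, hcu⟩

lemma indepCount_eq_zero_of_card_lt {V : Type*} [Fintype V] (G : SimpleGraph V) {k : ℕ}
    (h : Fintype.card V < k) : indepCount G k = 0 := by
  classical
  rw [indepCount_eq, Finset.card_eq_zero, Finset.filter_eq_empty_iff]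
  rintro s _ ⟨_, hcard⟩
  have : s.card ≤ Fintype.card V := Finset.card_le_univ s
  rw [hcard] at this
  omega

/-- A sequence `f_{-1} = 1, f_0, …, f_d` of positive integers is the face vector of a flag
complex if and only if it is (extended by zeros) the `h`-vector of the independence complex
of a fully-whiskered graph. -/
theorem faceVector_flag_iff_hVector_fullWhisker (d : ℕ) (f : ℕ → ℕ) (hf0 : f 0 = 1)
    (hfpos : ∀ i ≤ d + 1, 0 < f i) :
    (∃ (V : Type) (_ : Fintype V) (G : SimpleGraph V),
        (∀ i ≤ d + 1, indepCount G i = f i) ∧ indepCount G (d + 2) = 0) ↔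
    (∃ (W : Type) (_ : Fintype W) (H : SimpleGraph W),
        d + 1 ≤ Fintype.card W ∧
        ∀ j ≤ Fintype.card W,
          indepCount (fullWhisker H) j =
            ∑ i ∈ Finset.range (min j (d + 1) + 1),
              (Fintype.card W - i).choose (j - i) * f i) := by
  classical
  constructor
  · rintro ⟨V, hV, G, hG, hG0⟩
    have hzero : ∀ i, d + 2 ≤ i → indepCount G i = 0 :=
      fun i hi => indepCount_eq_zero_of_le hG0 hi
    have hcard : d + 1 ≤ Fintype.card V := by
      by_contra hlt
      have h1 := indepCount_eq_zero_of_card_lt G (k := d + 1) (by omega)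
      rw [hG (d + 1) le_rfl] at h1
      have h2 := hfpos (d + 1) le_rfl
      omega
    refine ⟨V, hV, G, hcard, fun j hj => ?_⟩
    rw [whisker_count]
    rcases le_or_gt j (d + 1) with h | h
    · rw [min_eq_left h]
      refine Finset.sum_congr rfl fun i hi => ?_
      rw [Finset.mem_range] at hi
      rw [hG i (by omega)]
    · rw [min_eq_right h.le]
      rw [← Finset.sum_subset (Finset.range_subset_range.2 (by omega : d + 1 + 1 ≤ j + 1))
        (fun x hx hnx => by
          rw [Finset.mem_range] at hx hnx
          rw [hzero x (by omega), mul_zero])]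
      refine Finset.sum_congr rfl fun i hi => ?_
      rw [Finset.mem_range] at hi
      rw [hG i (by omega)]
  · rintro ⟨W, hW, H, ht, hH⟩
    set t := Fintype.card W with htdef
    set b : ℕ → ℕ := fun i => if i ≤ d + 1 then f i else 0 with hb
    have key : ∀ j ≤ t, ∑ i ∈ Finset.range (j + 1),
        (t - i).choose (j - i) * indepCount H i
        = ∑ i ∈ Finset.range (j + 1), (t - i).choose (j - i) * b i := by
      intro j hj
      rw [← whisker_count, hH j hj]
      have h1 : ∑ i ∈ Finset.range (min j (d + 1) + 1), (t - i).choose (j - i) * f i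
          = ∑ i ∈ Finset.range (min j (d + 1) + 1), (t - i).choose (j - i) * b i := by
        refine Finset.sum_congr rfl fun i hi => ?_
        rw [Finset.mem_range] at hi
        rw [hb]
        simp only []
        rw [if_pos (by omega)]
      rw [h1]
      refine Finset.sum_subset (Finset.range_subset_range.2 (by omega)) fun x hx hnx => ?_
      rw [Finset.mem_range] at hx hnx
      have : ¬ x ≤ d + 1 := by omega
      rw [hb]
      simp only []
      rw [if_neg this, mul_zero]
    have ha := inv_lemma t _ b key
    refine ⟨W, hW, H, fun i hi => ?_, ?_⟩
    · rw [ha i (le_trans hi ht)]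
      simp [hb, hi]
    · rcases le_or_gt (d + 2) t with h | h
      · rw [ha (d + 2) h]
        simp [hb]
      · exact indepCount_eq_zero_of_card_lt H (by omega)
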